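/- Let F be a finite field with q elements, L a field, and φ : F → L a ring homomorphism. Let (x, y) ∈ L² with (x, y) ≠ (0, 0). Then xy^q = x^qy holds in L if and only if there exist a unit λ ∈ L^× and a pair (a, b) ∈ F² with (a, b) ≠ (0, 0) such that x = λ·φ(a) and y = λ·φ(b). -/

import Mathlib

open Polynomial in
lemma fixed_pow_card_mem_image {F : Type*} [Field F] [Fintype F] (q : ℕ)
    (hq : q = Fintype.card F) {L : Type*} [Field L] (φ : F →+* L)
    (z : L) (hz : z ^ q = z) : ∃ a : F, φ a = z := by
  classical
  have hq2 : 2 ≤ q := by rw [hq]; exact Fintype.one_lt_card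
  set P : L[X] := X ^ q - X with hP
  have hPne : P ≠ 0 := by
    intro h
    have := congrArg (fun p => p.coeff q) h
    have h1 : ¬ (1 = q) := by omega
    simp [hP, Polynomial.coeff_X_pow, Polynomial.coeff_X, h1] at this
  have hdeg : P.natDegree = q := by
    rw [hP]
    compute_degree!
    all_goals first
      | omega
      | simp [if_neg (show ¬ 1 = q by omega)]
  have hroot : ∀ a : F, IsRoot P (φ a) := by
    intro a
    have : a ^ q = a := by rw [hq]; exact FiniteField.pow_card a
    simp [hP, IsRoot, ← map_pow, this]
  have hsub : (Finset.univ.image φ) ⊆ P.roots.toFinset := by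
    intro w hw
    simp only [Finset.mem_image] at hw
    obtain ⟨a, _, rfl⟩ := hw
    rw [Multiset.mem_toFinset, mem_roots hPne]
    exact hroot a
  have hcardim : (Finset.univ.image φ).card = q := by
    rw [Finset.card_image_of_injective _ φ.injective, Finset.card_univ, hq]
  have hcardroots : P.roots.toFinset.card ≤ q := by
    calc P.roots.toFinset.card ≤ Multiset.card P.roots := P.roots.toFinset_card_le
      _ ≤ P.natDegree := P.card_roots' 
      _ = q := hdeg
  have heq : (Finset.univ.image φ) = P.roots.toFinset :=
    Finset.eq_of_subset_of_card_le hsub (by omega)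
  have hzmem : z ∈ P.roots.toFinset := by
    rw [Multiset.mem_toFinset, mem_roots hPne]
    simp [IsRoot, hP, hz]
  rw [← heq] at hzmem
  simpa using hzmem

/-- Let `F` be a finite field with `q` elements, `L` a field, `φ : F → L` a ring homomorphism, and
`(x, y) ∈ L²` with `(x, y) ≠ (0, 0)`. Then `xy^q = x^qy` if and only if there are a unit `λ ∈ Lˣ`
and a pair `(a, b) ∈ F²` with `(a, b) ≠ (0, 0)` such that `x = λ·φ(a)` and `y = λ·φ(b)`. -/
theorem drinfeld_points_at_infinity
    {F : Type*} [Field F] [Fintype F] (q : ℕ) (hq : q = Fintype.card F)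
    {L : Type*} [Field L] (φ : F →+* L) (x y : L) (hxy : (x, y) ≠ (0, 0)) :
    x * y ^ q = x ^ q * y ↔
      ∃ (l : Lˣ) (a b : F), (a, b) ≠ (0, 0) ∧ x = (l : L) * φ a ∧ y = (l : L) * φ b := by
  constructor
  · intro h
    by_cases hy : y = 0
    · have hx : x ≠ 0 := by
        intro hx; exact hxy (by simp [hx, hy])
      exact ⟨Units.mk0 x hx, 1, 0, by simp, by simp, by simp [hy]⟩
    · have hzq : (x / y) ^ q = x / y := by
        rw [div_pow, div_eq_div_iff (pow_ne_zero _ hy) hy]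
        linear_combination -h
      obtain ⟨a, ha⟩ := fixed_pow_card_mem_image q hq φ (x / y) hzq
      refine ⟨Units.mk0 y hy, a, 1, by simp, ?_, by simp⟩
      rw [ha]
      field_simp
      rfl
  · rintro ⟨l, a, b, -, rfl, rfl⟩
    have ha : a ^ q = a := by rw [hq]; exact FiniteField.pow_card a
    have hb : b ^ q = b := by rw [hq]; exact FiniteField.pow_card b
    have : a * b ^ q = a ^ q * b := by rw [ha, hb]
    calc (l : L) * φ a * ((l : L) * φ b) ^ q
        = (l : L) ^ (q + 1) * φ (a * b ^ q) := by rw [map_mul, map_pow]; ring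
      _ = (l : L) ^ (q + 1) * φ (a ^ q * b) := by rw [this]
      _ = ((l : L) * φ a) ^ q * ((l : L) * φ b) := by rw [map_mul, map_pow]; ring
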